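/- Let T be a positive linear map on n × n complex matrices with Δ(T) ≤ Δ < ∞. Let v be a positive definite matrix with T(v) = λ·v for some λ > 0, and let x be positive definite with T(x) ≠ 0 and d_H(T(x), x) ≤ δ. Then d_H(x, v) ≤ δ / (1 − tanh(Δ/4)). -/

import Mathlib

open Matrix Filter
open scoped ComplexOrder

noncomputable section

/-- The positive semidefinite square root of a positive semidefinite matrix, as defined
by `Matrix.PosSemidef.sqrt` in the older Mathlib (since removed). -/
def posSemidefSqrt {m : Type*} [Fintype m] [DecidableEq m] {A : Matrix m m ℂ}
    (hA : A.PosSemidef) : Matrix m m ℂ :=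
  (hA.1.eigenvectorUnitary : Matrix m m ℂ) * diagonal ((↑) ∘ (√·) ∘ hA.1.eigenvalues) *
    (star hA.1.eigenvectorUnitary : Matrix m m ℂ)

/-- The trace norm `‖A‖₁ = Tr √(AᴴA)` of a complex square matrix. -/
def traceNorm {m : Type*} [Fintype m] [DecidableEq m] (A : Matrix m m ℂ) : ℝ :=
  (posSemidefSqrt (Matrix.posSemidef_conjTranspose_mul_self A)).trace.re

/-- Spectral radius of a map on a complex vector space:
the supremum of the moduli of its eigenvalues. -/
def specRad {M : Type*} [Zero M] [SMul ℂ M] (T : M → M) : ℝ :=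
  sSup {r : ℝ | ∃ (c : ℂ) (v : M), v ≠ 0 ∧ T v = c • v ∧ r = ‖c‖}

/-- A linear map on square matrices is positive if it maps positive semidefinite
matrices to positive semidefinite matrices. -/
def IsPosMap {m : Type*} [Fintype m] (T : Matrix m m ℂ →ₗ[ℂ] Matrix m m ℂ) : Prop :=
  ∀ A : Matrix m m ℂ, A.PosSemidef → (T A).PosSemidef

/-- `sup(x/y) = inf {λ ≥ 0 : x ≤ λ y}` (in `[0,∞]`, with the Loewner order). -/
def supRatio {m : Type*} [Fintype m] (x y : Matrix m m ℂ) : ENNReal :=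
  sInf {r : ENNReal | ∃ c : ℝ, 0 ≤ c ∧ r = ENNReal.ofReal c ∧ (c • y - x).PosSemidef}

/-- `inf(x/y) = sup {λ ≥ 0 : λ y ≤ x}` (in `[0,∞]`, with the Loewner order). -/
def infRatio {m : Type*} [Fintype m] (x y : Matrix m m ℂ) : ENNReal :=
  sSup {r : ENNReal | ∃ c : ℝ, 0 ≤ c ∧ r = ENNReal.ofReal c ∧ (x - c • y).PosSemidef}

/-- The Hilbert projective metric `d_H(x,y) = log (sup(x/y) / inf(x/y)) ∈ [0,∞]`. -/
def dH {m : Type*} [Fintype m] (x y : Matrix m m ℂ) : EReal :=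
  ENNReal.log (supRatio x y / infRatio x y)

/-- The projective diameter `Δ(T) = sup { d_H(T x, T y) : x, y PSD nonzero }`. -/
def DeltaT {m : Type*} [Fintype m] (T : Matrix m m ℂ →ₗ[ℂ] Matrix m m ℂ) : EReal :=
  sSup {e : EReal | ∃ x y : Matrix m m ℂ,
    x.PosSemidef ∧ x ≠ 0 ∧ y.PosSemidef ∧ y ≠ 0 ∧ e = dH (T x) (T y)}

end

set_option maxHeartbeats 1000000

namespace Stmt9Aux
variable {n : ℕ}

/-- real quadratic form of a matrix -/
noncomputable def q (A : Matrix (Fin n) (Fin n) ℂ) (z : Fin n → ℂ) : ℝ := (star z ⬝ᵥ A.mulVec z).re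

lemma q_zero_vec (A : Matrix (Fin n) (Fin n) ℂ) : q A 0 = 0 := by simp [q]

lemma q_add (A B : Matrix (Fin n) (Fin n) ℂ) (z : Fin n → ℂ) : q (A + B) z = q A z + q B z := by
  simp [q, Matrix.add_mulVec, dotProduct_add]

lemma q_sub (A B : Matrix (Fin n) (Fin n) ℂ) (z : Fin n → ℂ) : q (A - B) z = q A z - q B z := by
  simp [q, Matrix.sub_mulVec, dotProduct_sub]

lemma q_smul (r : ℝ) (A : Matrix (Fin n) (Fin n) ℂ) (z : Fin n → ℂ) : q (r • A) z = r * q A z := by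
  simp [q, Matrix.smul_mulVec, dotProduct_smul]

lemma real_smul_eq (r : ℝ) (A : Matrix (Fin n) (Fin n) ℂ) : (r : ℂ) • A = r • A := by
  ext i j; simp [Matrix.smul_apply, Complex.real_smul]

lemma herm_smul (r : ℝ) {A : Matrix (Fin n) (Fin n) ℂ} (hA : A.IsHermitian) :
    (r • A).IsHermitian := by
  ext i j
  simp only [Matrix.conjTranspose_apply, Matrix.smul_apply, star_smul, star_trivial]
  congr 1
  rw [← Matrix.conjTranspose_apply, hA.eq]

lemma im_eq_zero {A : Matrix (Fin n) (Fin n) ℂ} (hA : A.IsHermitian) (z : Fin n → ℂ) :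
    (star z ⬝ᵥ A.mulVec z).im = 0 := by
  have h : (starRingEnd ℂ) (star z ⬝ᵥ A.mulVec z) = star z ⬝ᵥ A.mulVec z := by
    calc (starRingEnd ℂ) (star z ⬝ᵥ A.mulVec z) = star (star z ⬝ᵥ A.mulVec z) := rfl
    _ = star (A.mulVec z) ⬝ᵥ z := by rw [star_dotProduct, star_star]
    _ = (star z ᵥ* Aᴴ) ⬝ᵥ z := by rw [star_mulVec]
    _ = star z ⬝ᵥ (Aᴴ *ᵥ z) := by rw [← dotProduct_mulVec]
    _ = star z ⬝ᵥ A.mulVec z := by rw [hA.eq]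
  exact Complex.conj_eq_iff_im.mp h

lemma psd_iff {A : Matrix (Fin n) (Fin n) ℂ} (hA : A.IsHermitian) :
    A.PosSemidef ↔ ∀ z, 0 ≤ q A z := by
  constructor
  · exact fun h z => h.re_dotProduct_nonneg z
  · intro h
    refine posSemidef_iff_dotProduct_mulVec.mpr ⟨hA, fun z => ?_⟩
    rw [Complex.le_def]
    refine ⟨by simpa [q] using h z, by simpa using (im_eq_zero hA z).symm⟩

lemma posdef_iff {A : Matrix (Fin n) (Fin n) ℂ} (hA : A.IsHermitian) :
    A.PosDef ↔ ∀ z ≠ 0, 0 < q A z := by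
  constructor
  · exact fun h z hz => h.re_dotProduct_pos hz
  · intro h
    refine posDef_iff_dotProduct_mulVec.mpr ⟨hA, fun z hz => ?_⟩
    rw [Complex.lt_def]
    refine ⟨by simpa [q] using h z hz, by simpa using (im_eq_zero hA z).symm⟩

lemma psd_sub_iff {A B : Matrix (Fin n) (Fin n) ℂ} (hA : A.IsHermitian) (hB : B.IsHermitian) :
    (B - A).PosSemidef ↔ ∀ z, q A z ≤ q B z := by
  rw [psd_iff (hB.sub hA)]
  refine forall_congr' fun z => ?_
  rw [q_sub]; constructor <;> intro h <;> linarith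


lemma q_nonneg {A : Matrix (Fin n) (Fin n) ℂ} (hA : A.PosSemidef) (z : Fin n → ℂ) : 0 ≤ q A z :=
  hA.re_dotProduct_nonneg z

lemma q_smul_vec (A : Matrix (Fin n) (Fin n) ℂ) (r : ℝ) (z : Fin n → ℂ) :
    q A (r • z) = r ^ 2 * q A z := by
  have hs : star (r • z) = r • star z := by
    funext i; simp [star_smul]
  simp only [q, hs, Matrix.mulVec_smul, smul_dotProduct, dotProduct_smul]
  simp [Complex.smul_re]; ring

lemma q_cont (A : Matrix (Fin n) (Fin n) ℂ) : Continuous (q A) := by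
  apply Complex.continuous_re.comp
  simp only [Matrix.mulVec, dotProduct]
  apply continuous_finset_sum
  intro i _
  exact ((continuous_star.comp (continuous_apply i))).mul
    (continuous_finset_sum _ fun j _ => continuous_const.mul (continuous_apply j))

lemma exists_q_eq_zero_imp {A : Matrix (Fin n) (Fin n) ℂ} (hA : A.PosSemidef)
    (h : ∀ z, q A z ≤ 0) : A = 0 := by
  have h0 : ∀ z, A.mulVec z = 0 := by
    intro z
    rw [← (hA.dotProduct_mulVec_zero_iff z)]
    have him := hA.isHermitian
    have : (star z ⬝ᵥ A.mulVec z).re = 0 := le_antisymm (h z) (q_nonneg hA z)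
    have him0 : (star z ⬝ᵥ A.mulVec z).im = 0 := by
      have hh : (starRingEnd ℂ) (star z ⬝ᵥ A.mulVec z) = star z ⬝ᵥ A.mulVec z := by
        calc (starRingEnd ℂ) (star z ⬝ᵥ A.mulVec z) = star (star z ⬝ᵥ A.mulVec z) := rfl
        _ = star (A.mulVec z) ⬝ᵥ z := by rw [star_dotProduct, star_star]
        _ = (star z ᵥ* Aᴴ) ⬝ᵥ z := by rw [star_mulVec]
        _ = star z ⬝ᵥ (Aᴴ *ᵥ z) := by rw [← dotProduct_mulVec]
        _ = star z ⬝ᵥ A.mulVec z := by rw [him.eq]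
      exact Complex.conj_eq_iff_im.mp hh
    exact Complex.ext this him0
  ext i j
  have := congrFun (h0 (Pi.single j 1)) i
  simpa [Matrix.mulVec_single] using this

lemma exists_q_pos {A : Matrix (Fin n) (Fin n) ℂ} (hA : A.PosSemidef) (h0 : A ≠ 0) :
    ∃ z, 0 < q A z := by
  by_contra h
  push_neg at h
  exact h0 (exists_q_eq_zero_imp hA h)

lemma exists_le_smul (hn : 0 < n) {x y : Matrix (Fin n) (Fin n) ℂ}
    (hx : x.PosSemidef) (hy : y.PosDef) : ∃ C : ℝ, 0 ≤ C ∧ ∀ z, q x z ≤ C * q y z := by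
  haveI : Nonempty (Fin n) := ⟨⟨0, hn⟩⟩
  have hsph : (Metric.sphere (0 : Fin n → ℂ) 1).Nonempty := by
    refine ⟨fun _ => 1, ?_⟩
    simp [mem_sphere_zero_iff_norm, pi_norm_const]
  obtain ⟨zM, _, hzM⟩ := (isCompact_sphere (0 : Fin n → ℂ) 1).exists_isMaxOn hsph
    (q_cont x).continuousOn
  obtain ⟨zm, hzmmem, hzm⟩ := (isCompact_sphere (0 : Fin n → ℂ) 1).exists_isMinOn hsph
    (q_cont y).continuousOn
  have hzm0 : zm ≠ 0 := by
    intro h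
    rw [h] at hzmmem
    simp [mem_sphere_zero_iff_norm] at hzmmem
  have hε : 0 < q y zm := hy.re_dotProduct_pos hzm0
  refine ⟨q x zM / q y zm, div_nonneg (le_trans (q_nonneg hx zM) ?_) hε.le, ?_⟩
  · exact le_refl _
  intro z
  rcases eq_or_ne z 0 with rfl | hz
  · simp [q]
  · have hr : (0:ℝ) < ‖z‖ := norm_pos_iff.mpr hz
    set u : Fin n → ℂ := ‖z‖⁻¹ • z with hu
    have humem : u ∈ Metric.sphere (0 : Fin n → ℂ) 1 := by
      simp only [mem_sphere_zero_iff_norm, hu, norm_smul, norm_inv, norm_norm]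
      field_simp
    have hzu : z = ‖z‖ • u := by
      rw [hu, smul_smul]
      field_simp
      rw [one_smul]
    have h1 : q x z = ‖z‖ ^ 2 * q x u := by conv_lhs => rw [hzu, q_smul_vec]
    have h2 : q y z = ‖z‖ ^ 2 * q y u := by conv_lhs => rw [hzu, q_smul_vec]
    have hxu : q x u ≤ q x zM := hzM humem
    have hyu : q y zm ≤ q y u := hzm humem
    have hq : 0 ≤ q x zM := le_trans (q_nonneg hx u) hxu
    rw [h1, h2, div_mul_eq_mul_div, le_div_iff₀ hε]
    nlinarith [mul_le_mul hxu hyu hε.le hq, sq_nonneg ‖z‖, q_nonneg hx u]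

lemma eps_le {P Q R : ℝ} (hR : 0 ≤ R) (h : ∀ ε : ℝ, 0 < ε → P ≤ Q + ε * R) : P ≤ Q := by
  rcases eq_or_lt_of_le hR with hR0 | hR0
  · have := h 1 one_pos; rw [← hR0] at this; linarith
  · by_contra hc
    push_neg at hc
    have h2 := h ((P - Q) / (2 * R)) (div_pos (by linarith) (by linarith))
    have h3 : (P - Q) / (2 * R) * R = (P - Q) / 2 := by field_simp
    rw [h3] at h2
    linarith

def setS (x y : Matrix (Fin n) (Fin n) ℂ) : Set ℝ := {c | 0 ≤ c ∧ (c • y - x).PosSemidef}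
def setI (x y : Matrix (Fin n) (Fin n) ℂ) : Set ℝ := {c | 0 ≤ c ∧ (x - c • y).PosSemidef}
noncomputable def Ms (x y : Matrix (Fin n) (Fin n) ℂ) : ℝ := sInf (setS x y)
noncomputable def mI (x y : Matrix (Fin n) (Fin n) ℂ) : ℝ := sSup (setI x y)

section
variable {x y : Matrix (Fin n) (Fin n) ℂ}

lemma vone_ne_zero [Nonempty (Fin n)] : (fun _ : Fin n => (1:ℂ)) ≠ 0 := by
  intro h
  have := congrFun h (Classical.arbitrary _)
  simp at this

lemma posdef_ne_zero [Nonempty (Fin n)] (hy : y.PosDef) : y ≠ 0 := by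
  intro h
  have := hy.re_dotProduct_pos (x := fun _ => (1:ℂ)) vone_ne_zero
  rw [h] at this
  simp at this

lemma mem_setS_q (hx : x.IsHermitian) (hy : y.IsHermitian) {c : ℝ} (hc : c ∈ setS x y) :
    ∀ z, q x z ≤ c * q y z := by
  intro z
  have := (psd_sub_iff hx (herm_smul c hy)).mp hc.2 z
  rwa [q_smul] at this

lemma mem_setI_q (hx : x.IsHermitian) (hy : y.IsHermitian) {c : ℝ} (hc : c ∈ setI x y) :
    ∀ z, c * q y z ≤ q x z := by
  intro z
  have := (psd_sub_iff (herm_smul c hy) hx).mp hc.2 z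
  rwa [q_smul] at this

lemma bddBelow_setS : BddBelow (setS x y) := ⟨0, fun _ hc => hc.1⟩

lemma setS_nonempty (hn : 0 < n) (hx : x.PosSemidef) (hy : y.PosDef) : (setS x y).Nonempty := by
  obtain ⟨C, hC0, hC⟩ := exists_le_smul hn hx hy
  refine ⟨C, hC0, (psd_sub_iff hx.isHermitian (herm_smul C hy.isHermitian)).mpr fun z => ?_⟩
  rw [q_smul]; exact hC z

lemma Ms_nonneg (hn : 0 < n) (hx : x.PosSemidef) (hy : y.PosDef) : 0 ≤ Ms x y :=
  le_csInf (setS_nonempty hn hx hy) fun _ hc => hc.1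

lemma q_le_Ms (hn : 0 < n) (hx : x.PosSemidef) (hy : y.PosDef) (z : Fin n → ℂ) :
    q x z ≤ Ms x y * q y z := by
  apply eps_le (q_nonneg hy.posSemidef z)
  intro ε hε
  obtain ⟨c, hcS, hclt⟩ := Real.lt_sInf_add_pos (setS_nonempty hn hx hy) hε
  have h1 := mem_setS_q hx.isHermitian hy.isHermitian hcS z
  have hMs : Ms x y = sInf (setS x y) := rfl
  nlinarith [mul_le_mul_of_nonneg_right hclt.le (q_nonneg hy.posSemidef z)]

lemma Ms_psd (hn : 0 < n) (hx : x.PosSemidef) (hy : y.PosDef) :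
    (Ms x y • y - x).PosSemidef := by
  refine (psd_sub_iff hx.isHermitian (herm_smul _ hy.isHermitian)).mpr fun z => ?_
  rw [q_smul]; exact q_le_Ms hn hx hy z

lemma Ms_le {c : ℝ} (hc : c ∈ setS x y) : Ms x y ≤ c := csInf_le bddBelow_setS hc

lemma setI_nonempty (hx : x.PosSemidef) : (setI x y).Nonempty :=
  ⟨0, le_refl 0, by simpa using hx⟩

lemma bddAbove_setI [Nonempty (Fin n)] (hx : x.IsHermitian) (hy : y.PosDef) :
    BddAbove (setI x y) := by
  set z0 : Fin n → ℂ := fun _ => 1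
  have hqy : 0 < q y z0 := hy.re_dotProduct_pos vone_ne_zero
  refine ⟨q x z0 / q y z0, fun c hc => ?_⟩
  rw [le_div_iff₀ hqy]
  exact mem_setI_q hx hy.isHermitian hc z0

lemma mI_nonneg [Nonempty (Fin n)] (hx : x.PosSemidef) (hy : y.PosDef) : 0 ≤ mI x y :=
  le_csSup (bddAbove_setI hx.isHermitian hy) ⟨le_refl 0, by simpa using hx⟩

lemma q_ge_mI [Nonempty (Fin n)] (hx : x.PosSemidef) (hy : y.PosDef) (z : Fin n → ℂ) :
    mI x y * q y z ≤ q x z := by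
  apply eps_le (q_nonneg hy.posSemidef z)
  intro ε hε
  obtain ⟨c, hcI, hclt⟩ := Real.add_neg_lt_sSup (setI_nonempty hx) (neg_neg_iff_pos.mpr hε)
  have h1 := mem_setI_q hx.isHermitian hy.isHermitian hcI z
  have hmI : mI x y = sSup (setI x y) := rfl
  nlinarith [mul_le_mul_of_nonneg_right hclt.le (q_nonneg hy.posSemidef z)]

lemma mI_psd [Nonempty (Fin n)] (hx : x.PosSemidef) (hy : y.PosDef) :
    (x - mI x y • y).PosSemidef := by
  refine (psd_sub_iff (herm_smul _ hy.isHermitian) hx.isHermitian).mpr fun z => ?_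
  rw [q_smul]; exact q_ge_mI hx hy z

lemma le_mI [Nonempty (Fin n)] (hxh : x.IsHermitian) (hy : y.PosDef) {c : ℝ}
    (hc : c ∈ setI x y) : c ≤ mI x y := le_csSup (bddAbove_setI hxh hy) hc

lemma mI_le_Ms (hn : 0 < n) [Nonempty (Fin n)] (hx : x.PosSemidef) (hy : y.PosDef) :
    mI x y ≤ Ms x y := by
  set z0 : Fin n → ℂ := fun _ => 1
  have hqy : 0 < q y z0 := hy.re_dotProduct_pos vone_ne_zero
  have h1 := q_ge_mI hx hy z0
  have h2 := q_le_Ms hn hx hy z0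
  have := h1.trans h2
  exact le_of_mul_le_mul_right this hqy

lemma mI_pos (hn : 0 < n) [Nonempty (Fin n)] (hx : x.PosDef) (hy : y.PosDef) : 0 < mI x y := by
  obtain ⟨C, hC0, hC⟩ := exists_le_smul hn hy.posSemidef hx
  set z0 : Fin n → ℂ := fun _ => 1
  have hqy : 0 < q y z0 := hy.re_dotProduct_pos vone_ne_zero
  have hqx : 0 < q x z0 := hx.re_dotProduct_pos vone_ne_zero
  have hCpos : 0 < C := by nlinarith [hC z0]
  have hmem : C⁻¹ ∈ setI x y := by
    refine ⟨by positivity, (psd_sub_iff (herm_smul _ hy.isHermitian) hx.isHermitian).mpr fun z => ?_⟩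
    rw [q_smul, inv_mul_le_iff₀ hCpos]
    exact hC z
  calc (0:ℝ) < C⁻¹ := by positivity
  _ ≤ mI x y := le_mI hx.isHermitian hy hmem

lemma Ms_pos (hn : 0 < n) (hx : x.PosSemidef) (hy : y.PosDef) (h0 : x ≠ 0) : 0 < Ms x y := by
  obtain ⟨z, hz⟩ := exists_q_pos hx h0
  have := q_le_Ms hn hx hy z
  nlinarith [q_nonneg hy.posSemidef z]

lemma supRatio_eq (hn : 0 < n) (hx : x.PosSemidef) (hy : y.PosDef) :
    supRatio x y = ENNReal.ofReal (Ms x y) := by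
  apply le_antisymm
  · exact sInf_le ⟨Ms x y, Ms_nonneg hn hx hy, rfl, Ms_psd hn hx hy⟩
  · apply le_sInf
    rintro r ⟨c, hc0, rfl, hpsd⟩
    exact ENNReal.ofReal_le_ofReal (Ms_le ⟨hc0, hpsd⟩)

lemma infRatio_eq [Nonempty (Fin n)] (hx : x.PosSemidef) (hy : y.PosDef) :
    infRatio x y = ENNReal.ofReal (mI x y) := by
  apply le_antisymm
  · apply sSup_le
    rintro r ⟨c, hc0, rfl, hpsd⟩
    exact ENNReal.ofReal_le_ofReal (le_mI hx.isHermitian hy ⟨hc0, hpsd⟩)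
  · exact le_sSup ⟨mI x y, mI_nonneg hx hy, rfl, mI_psd hx hy⟩

lemma dH_eq (hn : 0 < n) [Nonempty (Fin n)] (hx : x.PosDef) (hy : y.PosDef) :
    dH x y = ((Real.log (Ms x y / mI x y) : ℝ) : EReal) := by
  rw [dH, supRatio_eq hn hx.posSemidef hy, infRatio_eq hx.posSemidef hy,
    ← ENNReal.ofReal_div_of_pos (mI_pos hn hx hy),
    ENNReal.log_ofReal_of_pos
      (div_pos (Ms_pos hn hx.posSemidef hy (posdef_ne_zero hx)) (mI_pos hn hx hy))]

end

section EX
variable {n : ℕ}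

lemma extract {A B : Matrix (Fin n) (Fin n) ℂ} (hA : A.PosSemidef) (hB : B.PosSemidef)
    (hA0 : A ≠ 0) (hB0 : B ≠ 0) {r : ℝ} (h : dH A B ≤ (r : EReal)) :
    ∃ a b : ℝ, 0 < a ∧ a ≤ b ∧ b ≤ a * Real.exp r ∧
      (A - a • B).PosSemidef ∧ (b • B - A).PosSemidef := by
  set S := supRatio A B with hS
  set I := infRatio A B with hI
  obtain ⟨z0, hz0⟩ := exists_q_pos hB hB0
  -- I < ⊤
  have hIne : I ≠ ⊤ := by
    have hle : I ≤ ENNReal.ofReal (q A z0 / q B z0) := by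
      apply sSup_le
      rintro s ⟨c, hc0, rfl, hpsd⟩
      have hq := (psd_sub_iff (herm_smul c hB.isHermitian) hA.isHermitian).mp hpsd z0
      rw [q_smul] at hq
      exact ENNReal.ofReal_le_ofReal ((le_div_iff₀ hz0).mpr hq)
    exact ne_top_of_le_ne_top ENNReal.ofReal_ne_top hle
  -- S ≠ 0
  have hSne : S ≠ 0 := by
    intro hS0
    apply hA0
    apply exists_q_eq_zero_imp hA
    intro z
    have : q A z ≤ 0 + 0 * q B z := by
      rw [zero_mul, add_zero]
      apply eps_le (q_nonneg hB z)
      intro ε hε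
      have hlt : S < ENNReal.ofReal ε := by rw [hS0]; exact ENNReal.ofReal_pos.mpr hε
      obtain ⟨s, hsmem, hslt⟩ := sInf_lt_iff.mp hlt
      obtain ⟨c, hc0, rfl, hpsd⟩ := hsmem
      have hcε : c < ε := by
        by_contra hcc
        push_neg at hcc
        exact absurd (ENNReal.ofReal_le_ofReal hcc) (not_le.mpr hslt)
      have hq := (psd_sub_iff hA.isHermitian (herm_smul c hB.isHermitian)).mp hpsd z
      rw [q_smul] at hq
      have := mul_le_mul_of_nonneg_right hcε.le (q_nonneg hB z)
      linarith
    linarith [this]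
  -- I ≠ 0
  have hIn0 : I ≠ 0 := by
    intro hI0
    have : dH A B = ⊤ := by
      rw [dH, ← hS, ← hI, hI0, ENNReal.div_zero hSne, ENNReal.log_top]
    rw [this] at h
    exact EReal.coe_ne_top r (top_le_iff.mp h)
  -- S ≠ ⊤
  have hSnt : S ≠ ⊤ := by
    intro hST
    have : dH A B = ⊤ := by
      rw [dH, ← hS, ← hI, hST, ENNReal.top_div_of_ne_top hIne, ENNReal.log_top]
    rw [this] at h
    exact EReal.coe_ne_top r (top_le_iff.mp h)
  set a := I.toReal with ha'
  set b := S.toReal with hb'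
  have ha : 0 < a := ENNReal.toReal_pos hIn0 hIne
  have hb : 0 < b := ENNReal.toReal_pos hSne hSnt
  have hIa : I = ENNReal.ofReal a := (ENNReal.ofReal_toReal hIne).symm
  have hSb : S = ENNReal.ofReal b := (ENNReal.ofReal_toReal hSnt).symm
  -- membership lower
  have hmemI : (A - a • B).PosSemidef := by
    refine (psd_sub_iff (herm_smul a hB.isHermitian) hA.isHermitian).mpr fun z => ?_
    rw [q_smul]
    apply eps_le (q_nonneg hB z)
    intro ε hε
    rcases le_or_gt (a - ε) 0 with hc | hc
    · nlinarith [q_nonneg hB z, q_nonneg hA z, mul_le_mul_of_nonneg_right hc (q_nonneg hB z)]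
    · have hlt : ENNReal.ofReal (a - ε) < I := by
        rw [hIa]
        exact (ENNReal.ofReal_lt_ofReal_iff ha).mpr (by linarith)
      obtain ⟨s, hsmem, hslt⟩ := lt_sSup_iff.mp hlt
      obtain ⟨c, hc0, rfl, hpsd⟩ := hsmem
      have hcε : a - ε < c := by
        by_contra hcc
        push_neg at hcc
        exact absurd (ENNReal.ofReal_le_ofReal hcc) (not_le.mpr hslt)
      have hq := (psd_sub_iff (herm_smul c hB.isHermitian) hA.isHermitian).mp hpsd z
      rw [q_smul] at hq
      nlinarith [mul_le_mul_of_nonneg_right hcε.le (q_nonneg hB z)]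
  -- membership upper
  have hmemS : (b • B - A).PosSemidef := by
    refine (psd_sub_iff hA.isHermitian (herm_smul b hB.isHermitian)).mpr fun z => ?_
    rw [q_smul]
    apply eps_le (q_nonneg hB z)
    intro ε hε
    have hlt : S < ENNReal.ofReal (b + ε) := by
      rw [hSb]
      exact (ENNReal.ofReal_lt_ofReal_iff (by linarith)).mpr (by linarith)
    obtain ⟨s, hsmem, hslt⟩ := sInf_lt_iff.mp hlt
    obtain ⟨c, hc0, rfl, hpsd⟩ := hsmem
    have hcε : c < b + ε := by
      by_contra hcc
      push_neg at hcc
      exact absurd (ENNReal.ofReal_le_ofReal hcc) (not_le.mpr hslt)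
    have hq := (psd_sub_iff hA.isHermitian (herm_smul c hB.isHermitian)).mp hpsd z
    rw [q_smul] at hq
    nlinarith [mul_le_mul_of_nonneg_right hcε.le (q_nonneg hB z)]
  -- a ≤ b
  have hab : a ≤ b := by
    have h1 := (psd_sub_iff (herm_smul a hB.isHermitian) hA.isHermitian).mp hmemI z0
    have h2 := (psd_sub_iff hA.isHermitian (herm_smul b hB.isHermitian)).mp hmemS z0
    rw [q_smul] at h1 h2
    have := h1.trans h2
    exact le_of_mul_le_mul_right this hz0
  -- b ≤ a exp r
  have hbar : b ≤ a * Real.exp r := by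
    have hdh : dH A B = ((Real.log (b / a) : ℝ) : EReal) := by
      rw [dH, ← hS, ← hI, hSb, hIa, ← ENNReal.ofReal_div_of_pos ha,
        ENNReal.log_ofReal_of_pos (div_pos hb ha)]
    rw [hdh] at h
    have hlog : Real.log (b / a) ≤ r := EReal.coe_le_coe_iff.mp h
    have := (Real.log_le_iff_le_exp (div_pos hb ha)).mp hlog
    rwa [div_le_iff₀ ha, mul_comm] at this
  exact ⟨a, b, ha, hab, hbar, hmemI, hmemS⟩

end EX

lemma tanh_lt_one (x : ℝ) : Real.tanh x < 1 := by
  rw [Real.tanh_eq_sinh_div_cosh, div_lt_one (Real.cosh_pos x)]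
  nlinarith [Real.cosh_sub_sinh x, Real.exp_pos (-x)]

lemma tanh_mono {A B : ℝ} (h : A ≤ B) : Real.tanh A ≤ Real.tanh B := by
  rw [Real.tanh_eq_sinh_div_cosh, Real.tanh_eq_sinh_div_cosh,
    div_le_div_iff₀ (Real.cosh_pos A) (Real.cosh_pos B), Real.sinh_eq, Real.cosh_eq,
    Real.sinh_eq, Real.cosh_eq, Real.exp_neg, Real.exp_neg]
  have ha : 0 < Real.exp A := Real.exp_pos A
  have hb : 0 < Real.exp B := Real.exp_pos B
  have hab : Real.exp A ≤ Real.exp B := Real.exp_le_exp.mpr h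
  field_simp
  have h2 : 0 ≤ Real.exp B * Real.exp B - Real.exp A * Real.exp A := by nlinarith
  nlinarith [mul_nonneg (mul_pos ha hb).le h2]

lemma tanh_nonneg {x : ℝ} (h : 0 ≤ x) : 0 ≤ Real.tanh x := by
  have := tanh_mono h
  rwa [Real.tanh_zero] at this

lemma core1 {m M a b : ℝ} (hm : 0 < m) (hM : m ≤ M) (ha : 0 < a) (hab : a ≤ b) :
    Real.log (M * b + m) + Real.log (a + 1) - Real.log (M * a + m) - Real.log (b + 1)
      ≤ Real.tanh (Real.log (b / a) / 4) * Real.log (M / m) := by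
  have hb : 0 < b := lt_of_lt_of_le ha hab
  have hMpos : 0 < M := lt_of_lt_of_le hm hM
  set t := Real.tanh (Real.log (b / a) / 4) with htdef
  set r := Real.exp (Real.log (b / a) / 4) with hrdef
  have hrpos : 0 < r := Real.exp_pos _
  have hlogba : 0 ≤ Real.log (b / a) := Real.log_nonneg ((one_le_div ha).mpr hab)
  have hr1 : 1 ≤ r := Real.one_le_exp (by linarith)
  have hr4 : r ^ 4 = b / a := by
    rw [hrdef, ← Real.exp_nat_mul]
    rw [show ((4:ℕ):ℝ) * (Real.log (b/a)/4) = Real.log (b/a) by push_cast; ring]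
    exact Real.exp_log (div_pos hb ha)
  have hb4 : b = a * r ^ 4 := by rw [hr4]; field_simp
  have ht : t * (r ^ 2 + 1) = r ^ 2 - 1 := by
    rw [htdef, Real.tanh_eq_sinh_div_cosh, Real.sinh_eq, Real.cosh_eq, Real.exp_neg, ← hrdef]
    field_simp
  -- the function
  set f : ℝ → ℝ := fun L => t * L -
    (Real.log (Real.exp L * b + 1) - Real.log (Real.exp L * a + 1)) with hfdef
  have hderiv : ∀ L, HasDerivAt f
      (t - (Real.exp L * b / (Real.exp L * b + 1) - Real.exp L * a / (Real.exp L * a + 1))) L := by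
    intro L
    have h1 : HasDerivAt (fun L => Real.exp L * b + 1) (Real.exp L * b) L :=
      (((Real.hasDerivAt_exp L).mul_const b).add_const 1)
    have h2 : HasDerivAt (fun L => Real.exp L * a + 1) (Real.exp L * a) L :=
      (((Real.hasDerivAt_exp L).mul_const a).add_const 1)
    have hp1 : (0:ℝ) < Real.exp L * b + 1 := by positivity
    have hp2 : (0:ℝ) < Real.exp L * a + 1 := by positivity
    have h3 := h1.log (ne_of_gt hp1)
    have h4 := h2.log (ne_of_gt hp2)
    have := ((hasDerivAt_id L).const_mul t).sub (h3.sub h4)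
    rw [mul_one] at this
    exact this
  have hmono : Monotone f := by
    apply monotone_of_deriv_nonneg (fun L => (hderiv L).differentiableAt)
    intro L
    rw [(hderiv L).deriv]
    set c := Real.exp L with hc'
    have hc : 0 < c := Real.exp_pos L
    have hp1 : (0:ℝ) < c * b + 1 := by positivity
    have hp2 : (0:ℝ) < c * a + 1 := by positivity
    rw [sub_nonneg, div_sub_div _ _ (ne_of_gt hp1) (ne_of_gt hp2), div_le_iff₀ (mul_pos hp1 hp2)]
    have h3 : 0 ≤ (r ^ 2 - 1) * (c * a * r ^ 2 - 1) ^ 2 :=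
      mul_nonneg (by nlinarith) (sq_nonneg _)
    have h2 : (c * b * (c * a + 1) - (c * b + 1) * (c * a)) * (r ^ 2 + 1)
        ≤ (r ^ 2 - 1) * ((c * b + 1) * (c * a + 1)) := by
      rw [hb4]
      nlinarith [h3]
    have hr2 : (0:ℝ) < r ^ 2 + 1 := by positivity
    apply le_of_mul_le_mul_right _ hr2
    calc (c * b * (c * a + 1) - (c * b + 1) * (c * a)) * (r ^ 2 + 1)
        ≤ (r ^ 2 - 1) * ((c * b + 1) * (c * a + 1)) := h2
    _ = t * ((c * b + 1) * (c * a + 1)) * (r ^ 2 + 1) := by rw [← ht]; ring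
  set L0 := Real.log (M / m) with hL0
  have hL0nn : 0 ≤ L0 := Real.log_nonneg ((one_le_div hm).mpr hM)
  have hle := hmono hL0nn
  have hexpL0 : Real.exp L0 = M / m := Real.exp_log (div_pos hMpos hm)
  have hf0 : f 0 = -(Real.log (b + 1) - Real.log (a + 1)) := by
    simp [hfdef]
  have hfL0 : f L0 = t * L0 - (Real.log (M * b + m) - Real.log (M * a + m)) := by
    rw [hfdef]
    simp only
    rw [hexpL0]
    have e1 : M / m * b + 1 = (M * b + m) / m := by field_simp
    have e2 : M / m * a + 1 = (M * a + m) / m := by field_simp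
    rw [e1, e2, Real.log_div (by positivity) (ne_of_gt hm), Real.log_div (by positivity) (ne_of_gt hm)]
    ring
  rw [hf0, hfL0] at hle
  linarith


lemma conclude1 {L d t : ℝ} (h : L ≤ d) (hd : 0 ≤ d) (ht0 : 0 ≤ t) (ht1 : t < 1) :
    L ≤ d / (1 - t) := by
  have h2 : d ≤ d / (1 - t) := by
    rw [le_div_iff₀ (by linarith)]
    nlinarith
  linarith

lemma conclude2 {L d t : ℝ} (h : L ≤ d + t * L) (ht1 : t < 1) : L ≤ d / (1 - t) := by
  rw [le_div_iff₀ (by linarith)]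
  nlinarith

end Stmt9Aux

open Stmt9Aux

/-- Let `T` be a positive linear map with `Δ(T) ≤ Δ < ∞`, let `v` be a
positive definite eigenvector of `T` with eigenvalue `λ > 0`, and let `x` be positive
definite with `T(x) ≠ 0` and `d_H(T(x), x) ≤ δ`.
Then `d_H(x, v) ≤ δ / (1 - tanh(Δ/4))`. -/
theorem stmt9 (n : ℕ)
    (T : Matrix (Fin n) (Fin n) ℂ →ₗ[ℂ] Matrix (Fin n) (Fin n) ℂ) (hT : IsPosMap T)
    (Δ : ℝ) (hΔ : DeltaT T ≤ (Δ : EReal))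
    (v : Matrix (Fin n) (Fin n) ℂ) (hv : v.PosDef)
    (lam : ℝ) (hlam : 0 < lam) (heig : T v = (lam : ℂ) • v)
    (x : Matrix (Fin n) (Fin n) ℂ) (hx : x.PosDef) (hTx : T x ≠ 0)
    (δ : ℝ) (hδ : dH (T x) x ≤ (δ : EReal)) :
    dH x v ≤ ((δ / (1 - Real.tanh (Δ / 4)) : ℝ) : EReal) := by
  rcases Nat.eq_zero_or_pos n with hn0 | hn
  · exfalso; apply hTx; subst hn0; ext i j; exact i.elim0
  haveI : Nonempty (Fin n) := ⟨⟨0, hn⟩⟩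
  have hxpsd := hx.posSemidef
  have hx0 : x ≠ 0 := posdef_ne_zero hx
  have hTxpsd : (T x).PosSemidef := hT x hxpsd
  set t := Real.tanh (Δ / 4) with htdef
  have ht1 : t < 1 := tanh_lt_one _
  set M := Ms x v with hM'
  set m := mI x v with hm'
  have hm : 0 < m := mI_pos hn hx hv
  have hmM : m ≤ M := mI_le_Ms hn hxpsd hv
  have hMpos : 0 < M := lt_of_lt_of_le hm hmM
  -- extract from δ hypothesis
  obtain ⟨a₁, b₁, ha₁, hab₁, hb₁, hmem₁L, hmem₁U⟩ := extract hTxpsd hxpsd hTx hx0 hδ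
  have hb₁pos : 0 < b₁ := lt_of_lt_of_le ha₁ hab₁
  have hδ0 : 0 ≤ δ := by
    have h1 : (1:ℝ) ≤ Real.exp δ := by nlinarith
    exact Real.one_le_exp_iff.mp h1
  have hlogb₁ : Real.log (b₁ / a₁) ≤ δ :=
    (Real.log_le_iff_le_exp (div_pos hb₁pos ha₁)).mpr ((div_le_iff₀ ha₁).mpr (by linarith))
  have hq₁L : ∀ z, a₁ * q x z ≤ q (T x) z := fun z => by
    have := (psd_sub_iff (herm_smul a₁ hxpsd.isHermitian) hTxpsd.isHermitian).mp hmem₁L z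
    rwa [q_smul] at this
  have hq₁U : ∀ z, q (T x) z ≤ b₁ * q x z := fun z => by
    have := (psd_sub_iff hTxpsd.isHermitian (herm_smul b₁ hxpsd.isHermitian)).mp hmem₁U z
    rwa [q_smul] at this
  -- Δ ≥ 0
  have hΔ0 : 0 ≤ Δ := by
    obtain ⟨z1, hz1⟩ := exists_q_pos hTxpsd hTx
    have hS1 : (1:ENNReal) ≤ supRatio (T x) (T x) := by
      apply le_sInf
      rintro r ⟨c, hc0, rfl, hpsd⟩
      have := (psd_sub_iff hTxpsd.isHermitian (herm_smul c hTxpsd.isHermitian)).mp hpsd z1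
      rw [q_smul] at this
      have hc1 : 1 ≤ c := by nlinarith
      simpa using ENNReal.one_le_ofReal.mpr hc1
    have hI1 : infRatio (T x) (T x) ≤ 1 := by
      apply sSup_le
      rintro r ⟨c, hc0, rfl, hpsd⟩
      have := (psd_sub_iff (herm_smul c hTxpsd.isHermitian) hTxpsd.isHermitian).mp hpsd z1
      rw [q_smul] at this
      have hc1 : c ≤ 1 := by nlinarith
      simpa using ENNReal.ofReal_le_one.mpr hc1
    have hd0 : (0:EReal) ≤ dH (T x) (T x) := by
      rw [dH]
      rw [show (0:EReal) = ENNReal.log 1 by simp]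
      apply ENNReal.log_monotone
      rw [ENNReal.le_div_iff_mul_le (Or.inr (by positivity)) (Or.inl (ne_top_of_le_ne_top ENNReal.one_ne_top hI1))]
      rw [one_mul]
      exact le_trans hI1 hS1
    have hDT : dH (T x) (T x) ≤ DeltaT T :=
      le_sSup ⟨x, x, hxpsd, hx0, hxpsd, hx0, rfl⟩
    have := le_trans (le_trans hd0 hDT) hΔ
    exact_mod_cast EReal.coe_le_coe_iff.mp (by rwa [← EReal.coe_zero] at this)
  have ht0 : 0 ≤ t := tanh_nonneg (by linarith)
  -- reduce to real inequality
  rw [dH_eq hn hx hv, EReal.coe_le_coe_iff]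
  rw [← hM', ← hm']
  rcases eq_or_lt_of_le hmM with heq | hlt
  · rw [← heq, div_self (ne_of_gt hm), Real.log_one]
    exact div_nonneg hδ0 (by linarith)
  -- m < M
  set u := x - m • v with hu'
  set w := M • v - x with hw'
  have hupsd : u.PosSemidef := mI_psd hxpsd hv
  have hwpsd : w.PosSemidef := Ms_psd hn hxpsd hv
  have hu0 : u ≠ 0 := by
    intro h
    have hxm : m • v - x = 0 := by
      rw [hu', sub_eq_zero] at h
      rw [sub_eq_zero]; exact h.symm
    have : M ≤ m := Ms_le ⟨hm.le, by rw [hxm]; exact Matrix.PosSemidef.zero⟩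
    linarith
  have hw0 : w ≠ 0 := by
    intro h
    have hxm : x - M • v = 0 := by
      rw [hw', sub_eq_zero] at h
      rw [sub_eq_zero]; exact h.symm
    have : M ≤ m := le_mI hx.isHermitian hv ⟨hMpos.le, by rw [hxm]; exact Matrix.PosSemidef.zero⟩
    linarith
  -- identities
  have hxuw : (M - m) • x = M • u + m • w := by
    rw [hu', hw']; ext i j
    simp only [Matrix.smul_apply, Matrix.sub_apply, Matrix.add_apply, smul_eq_mul,
      Complex.real_smul]
    push_cast; ring
  have hvuw : (M - m) • v = u + w := by
    rw [hu', hw']; ext i j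
    simp only [Matrix.smul_apply, Matrix.sub_apply, Matrix.add_apply, smul_eq_mul,
      Complex.real_smul]
    push_cast; ring
  have hTreal : ∀ (r : ℝ) (A : Matrix (Fin n) (Fin n) ℂ), T (r • A) = r • T A := fun r A => by
    rw [← real_smul_eq, T.map_smul, real_smul_eq]
  have hq_x : ∀ z, (M - m) * q (T x) z = M * q (T u) z + m * q (T w) z := fun z => by
    rw [← q_smul, ← hTreal, hxuw, map_add, hTreal, hTreal, q_add, q_smul, q_smul]
  have hq_v : ∀ z, (M - m) * q (T v) z = q (T u) z + q (T w) z := fun z => by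
    rw [← q_smul, ← hTreal, hvuw, map_add, q_add]
  have hqTv : ∀ z, q (T v) z = lam * q v z := fun z => by
    rw [heig, real_smul_eq, q_smul]
  have hTupsd : (T u).PosSemidef := hT u hupsd
  have hTwpsd : (T w).PosSemidef := hT w hwpsd
  -- degenerate cases
  by_cases hTu0 : T u = 0
  · have hTxv : ∀ z, q (T x) z = m * lam * q v z := fun z => by
      have hx_eq : x = m • v + u := by rw [hu']; ext i j; simp
      have : T x = m • T v + T u := by rw [hx_eq, map_add, hTreal]
      rw [this, hTu0, add_zero, q_smul, hqTv]; ring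
    have hml : 0 < m * lam := by positivity
    have hMle : M ≤ m * lam / a₁ := by
      apply Ms_le
      refine ⟨by positivity, (psd_sub_iff hx.isHermitian (herm_smul _ hv.isHermitian)).mpr fun z => ?_⟩
      rw [q_smul]
      have h1 := hq₁L z
      rw [hTxv z] at h1
      rw [div_mul_eq_mul_div, le_div_iff₀ ha₁]
      nlinarith
    have hmge : m * lam / b₁ ≤ m := by
      apply le_mI hx.isHermitian hv
      refine ⟨by positivity, (psd_sub_iff (herm_smul _ hv.isHermitian) hx.isHermitian).mpr fun z => ?_⟩
      rw [q_smul]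
      have h1 := hq₁U z
      rw [hTxv z] at h1
      rw [div_mul_eq_mul_div, div_le_iff₀ hb₁pos]
      nlinarith
    apply conclude1 _ hδ0 ht0 ht1
    calc Real.log (M / m) ≤ Real.log (b₁ / a₁) := by
          apply (Real.log_le_log_iff (div_pos hMpos hm) (div_pos hb₁pos ha₁)).mpr
          calc M / m ≤ (m * lam / a₁) / (m * lam / b₁) :=
                div_le_div₀ (by positivity) hMle (by positivity) hmge
          _ = b₁ / a₁ := by field_simp
    _ ≤ δ := hlogb₁
  by_cases hTw0 : T w = 0
  · have hTxv : ∀ z, q (T x) z = M * lam * q v z := fun z => by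
      have hx_eq : x = M • v - w := by rw [hw']; ext i j; simp
      have : T x = M • T v - T w := by rw [hx_eq, map_sub, hTreal]
      rw [this, hTw0, sub_zero, q_smul, hqTv]; ring
    have hml : 0 < M * lam := by positivity
    have hMle : M ≤ M * lam / a₁ := by
      apply Ms_le
      refine ⟨by positivity, (psd_sub_iff hx.isHermitian (herm_smul _ hv.isHermitian)).mpr fun z => ?_⟩
      rw [q_smul]
      have h1 := hq₁L z
      rw [hTxv z] at h1
      rw [div_mul_eq_mul_div, le_div_iff₀ ha₁]
      nlinarith
    have hmge : M * lam / b₁ ≤ m := by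
      apply le_mI hx.isHermitian hv
      refine ⟨by positivity, (psd_sub_iff (herm_smul _ hv.isHermitian) hx.isHermitian).mpr fun z => ?_⟩
      rw [q_smul]
      have h1 := hq₁U z
      rw [hTxv z] at h1
      rw [div_mul_eq_mul_div, div_le_iff₀ hb₁pos]
      nlinarith
    apply conclude1 _ hδ0 ht0 ht1
    calc Real.log (M / m) ≤ Real.log (b₁ / a₁) := by
          apply (Real.log_le_log_iff (div_pos hMpos hm) (div_pos hb₁pos ha₁)).mpr
          calc M / m ≤ (M * lam / a₁) / (M * lam / b₁) :=
                div_le_div₀ (by positivity) hMle (by positivity) hmge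
          _ = b₁ / a₁ := by field_simp
    _ ≤ δ := hlogb₁
  -- main case
  have hmemD : dH (T u) (T w) ∈ {e : EReal | ∃ x y : Matrix (Fin n) (Fin n) ℂ,
      x.PosSemidef ∧ x ≠ 0 ∧ y.PosSemidef ∧ y ≠ 0 ∧ e = dH (T x) (T y)} :=
    ⟨u, w, hupsd, hu0, hwpsd, hw0, rfl⟩
  have hduw : dH (T u) (T w) ≤ (Δ : EReal) := le_trans (le_sSup hmemD) hΔ
  obtain ⟨a, b, ha, hab, hbound, hmemL, hmemU⟩ := extract hTupsd hTwpsd hTu0 hTw0 hduw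
  have hbpos : 0 < b := lt_of_lt_of_le ha hab
  have hqL : ∀ z, a * q (T w) z ≤ q (T u) z := fun z => by
    have := (psd_sub_iff (herm_smul a hTwpsd.isHermitian) hTupsd.isHermitian).mp hmemL z
    rwa [q_smul] at this
  have hqU : ∀ z, q (T u) z ≤ b * q (T w) z := fun z => by
    have := (psd_sub_iff hTupsd.isHermitian (herm_smul b hTwpsd.isHermitian)).mp hmemU z
    rwa [q_smul] at this
  set A' := (M * a + m) / (a + 1) with hA'
  set B' := (M * b + m) / (b + 1) with hB'
  have hA'pos : 0 < A' := by rw [hA']; positivity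
  have hB'pos : 0 < B' := by rw [hB']; positivity
  have hup : ∀ z, q (T x) z ≤ B' * q (T v) z := by
    intro z
    have hB'eq : B' * (b + 1) = M * b + m := by rw [hB']; field_simp
    have e1 : (b + 1) * ((M - m) * (B' * q (T v) z - q (T x) z))
        = (M - m) * (b * q (T w) z - q (T u) z) := by
      calc (b + 1) * ((M - m) * (B' * q (T v) z - q (T x) z))
          = B' * (b + 1) * ((M - m) * q (T v) z) - (b + 1) * ((M - m) * q (T x) z) := by ring
      _ = (M * b + m) * (q (T u) z + q (T w) z)
            - (b + 1) * (M * q (T u) z + m * q (T w) z) := by rw [hB'eq, hq_v z, hq_x z]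
      _ = (M - m) * (b * q (T w) z - q (T u) z) := by ring
    have h2 : 0 ≤ (b + 1) * ((M - m) * (B' * q (T v) z - q (T x) z)) := by
      rw [e1]; exact mul_nonneg (sub_nonneg.mpr hlt.le) (sub_nonneg.mpr (hqU z))
    nlinarith [h2, mul_pos (show (0:ℝ) < b + 1 by linarith) (show (0:ℝ) < M - m by linarith)]
  have hdown : ∀ z, A' * q (T v) z ≤ q (T x) z := by
    intro z
    have hA'eq : A' * (a + 1) = M * a + m := by rw [hA']; field_simp
    have e1 : (a + 1) * ((M - m) * (q (T x) z - A' * q (T v) z))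
        = (M - m) * (q (T u) z - a * q (T w) z) := by
      calc (a + 1) * ((M - m) * (q (T x) z - A' * q (T v) z))
          = (a + 1) * ((M - m) * q (T x) z) - A' * (a + 1) * ((M - m) * q (T v) z) := by ring
      _ = (a + 1) * (M * q (T u) z + m * q (T w) z)
            - (M * a + m) * (q (T u) z + q (T w) z) := by rw [hA'eq, hq_v z, hq_x z]
      _ = (M - m) * (q (T u) z - a * q (T w) z) := by ring
    have h2 : 0 ≤ (a + 1) * ((M - m) * (q (T x) z - A' * q (T v) z)) := by
      rw [e1]; exact mul_nonneg (sub_nonneg.mpr hlt.le) (sub_nonneg.mpr (hqL z))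
    nlinarith [h2, mul_pos (show (0:ℝ) < a + 1 by linarith) (show (0:ℝ) < M - m by linarith)]
  -- bounds on M, m
  have hMle : M ≤ B' * lam / a₁ := by
    apply Ms_le
    refine ⟨by positivity, (psd_sub_iff hx.isHermitian (herm_smul _ hv.isHermitian)).mpr fun z => ?_⟩
    rw [q_smul]
    have h1 := hq₁L z
    have h2 := hup z
    rw [hqTv z] at h2
    rw [div_mul_eq_mul_div, le_div_iff₀ ha₁]
    nlinarith
  have hmge : A' * lam / b₁ ≤ m := by
    apply le_mI hx.isHermitian hv
    refine ⟨by positivity, (psd_sub_iff (herm_smul _ hv.isHermitian) hx.isHermitian).mpr fun z => ?_⟩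
    rw [q_smul]
    have h1 := hq₁U z
    have h2 := hdown z
    rw [hqTv z] at h2
    rw [div_mul_eq_mul_div, div_le_iff₀ hb₁pos]
    nlinarith
  -- combine
  have hL0 : 0 ≤ Real.log (M / m) := Real.log_nonneg ((one_le_div hm).mpr hmM)
  have hfrac : M / m ≤ (B' / A') * (b₁ / a₁) := by
    calc M / m ≤ (B' * lam / a₁) / (A' * lam / b₁) :=
          div_le_div₀ (by positivity) hMle (by positivity) hmge
    _ = (B' / A') * (b₁ / a₁) := by field_simp
  have hBA : 0 < B' / A' := by positivity
  have hL : Real.log (M / m) ≤ Real.log (B' / A') + δ := by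
    calc Real.log (M / m) ≤ Real.log ((B' / A') * (b₁ / a₁)) :=
          (Real.log_le_log_iff (div_pos hMpos hm) (by positivity)).mpr hfrac
    _ = Real.log (B' / A') + Real.log (b₁ / a₁) :=
          Real.log_mul (ne_of_gt hBA) (ne_of_gt (div_pos hb₁pos ha₁))
    _ ≤ Real.log (B' / A') + δ := by linarith
  have hlogba : Real.log (b / a) ≤ Δ :=
    (Real.log_le_iff_le_exp (div_pos hbpos ha)).mpr ((div_le_iff₀ ha).mpr (by linarith))
  have hcore : Real.log (B' / A') ≤ t * Real.log (M / m) := by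
    have h1 : Real.log (B' / A') = Real.log (M * b + m) + Real.log (a + 1)
        - Real.log (M * a + m) - Real.log (b + 1) := by
      rw [hB', hA', Real.log_div (by positivity) (by positivity),
        Real.log_div (by positivity) (by positivity),
        Real.log_div (by positivity) (by positivity)]
      ring
    rw [h1]
    calc Real.log (M * b + m) + Real.log (a + 1) - Real.log (M * a + m) - Real.log (b + 1)
        ≤ Real.tanh (Real.log (b / a) / 4) * Real.log (M / m) := core1 hm hmM ha hab
    _ ≤ t * Real.log (M / m) := by
        apply mul_le_mul_of_nonneg_right _ hL0
        exact tanh_mono (by linarith)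
  exact conclude2 (by linarith) ht1
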